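/- Poisson kernel decay: let 0 < γ < 1 and define P_t^γ(j) = (t^{2γ}/(4^γ Γ(γ) j!)) ∫_0^∞ e^{−s − t²/(4s)} s^{j−γ−1} ds for j ∈ ℕ and t > 0. Then there exists C_γ > 0 such that sup_{t>0} P_t^γ(j) ≤ C_γ / j for all j ≥ 1. -/

import Mathlib

open Real MeasureTheory

/-- The Poisson kernel
`P_t^γ(j) = (t^{2γ}/(4^γ Γ(γ) j!)) ∫_0^∞ e^{−s − t²/(4s)} s^{j−γ−1} ds`. -/
noncomputable def PoissonKer (γ t : ℝ) (j : ℕ) : ℝ :=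
  t ^ (2 * γ) / (4 ^ γ * Real.Gamma γ * (j.factorial : ℝ)) *
    ∫ s in Set.Ioi (0 : ℝ), Real.exp (-s - t ^ 2 / (4 * s)) * s ^ ((j : ℝ) - γ - 1)

lemma rpow_mul_exp_neg_le_one {γ x : ℝ} (hγ : 0 ≤ γ) (hγ1 : γ ≤ 1) (hx : 0 ≤ x) :
    x ^ γ * Real.exp (-x) ≤ 1 := by
  have h1 : x ^ γ ≤ 1 + x := by
    rcases le_total x 1 with h | h
    · calc x ^ γ ≤ 1 := Real.rpow_le_one hx h hγ
      _ ≤ 1 + x := by linarith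
    · calc x ^ γ ≤ x ^ (1:ℝ) := Real.rpow_le_rpow_of_exponent_le h hγ1
      _ = x := Real.rpow_one x
      _ ≤ 1 + x := by linarith
  have h2 : 1 + x ≤ Real.exp x := by linarith [Real.add_one_le_exp x]
  calc x ^ γ * Real.exp (-x) ≤ Real.exp x * Real.exp (-x) := by
        apply mul_le_mul_of_nonneg_right (h1.trans h2) (Real.exp_nonneg _)
    _ = 1 := by rw [← Real.exp_add]; simp

lemma key_bound {γ t s : ℝ} (hγ : 0 < γ) (hγ1 : γ < 1) (ht : 0 < t) (hs : 0 < s)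
    (j : ℕ) :
    t ^ (2 * γ) * (Real.exp (-s - t ^ 2 / (4 * s)) * s ^ ((j : ℝ) - γ - 1)) ≤
      4 ^ γ * (Real.exp (-s) * s ^ ((j : ℝ) - 1)) := by
  set x := t ^ 2 / (4 * s) with hxdef
  have hx : 0 < x := by positivity
  have h4s : (0:ℝ) < 4 * s := by linarith
  have ht2 : t ^ (2 * γ) = (4 * s) ^ γ * x ^ γ := by
    rw [← Real.mul_rpow h4s.le hx.le, hxdef, mul_div_cancel₀ _ h4s.ne',
      ← Real.rpow_natCast t 2, ← Real.rpow_mul ht.le]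
    norm_num [mul_comm]
  have hkey : t ^ (2 * γ) * Real.exp (-x) ≤ (4:ℝ) ^ γ * s ^ γ := by
    rw [ht2, Real.mul_rpow (by norm_num) hs.le]
    have h := rpow_mul_exp_neg_le_one hγ.le hγ1.le hx.le
    calc (4:ℝ) ^ γ * s ^ γ * x ^ γ * Real.exp (-x)
        = ((4:ℝ) ^ γ * s ^ γ) * (x ^ γ * Real.exp (-x)) := by ring
      _ ≤ ((4:ℝ) ^ γ * s ^ γ) * 1 :=
          mul_le_mul_of_nonneg_left h (by positivity)
      _ = (4:ℝ) ^ γ * s ^ γ := mul_one _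
  have hsplit : Real.exp (-s - x) = Real.exp (-s) * Real.exp (-x) := by
    rw [← Real.exp_add]; ring_nf
  have hspow : s ^ γ * s ^ ((j : ℝ) - γ - 1) = s ^ ((j : ℝ) - 1) := by
    rw [← Real.rpow_add hs]; ring_nf
  have hnn : 0 ≤ Real.exp (-s) * s ^ ((j : ℝ) - γ - 1) := by positivity
  calc t ^ (2 * γ) * (Real.exp (-s - x) * s ^ ((j : ℝ) - γ - 1))
      = (t ^ (2 * γ) * Real.exp (-x)) * (Real.exp (-s) * s ^ ((j : ℝ) - γ - 1)) := by
        rw [hsplit]; ring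
    _ ≤ ((4:ℝ) ^ γ * s ^ γ) * (Real.exp (-s) * s ^ ((j : ℝ) - γ - 1)) :=
        mul_le_mul_of_nonneg_right hkey hnn
    _ = 4 ^ γ * (Real.exp (-s) * s ^ ((j : ℝ) - 1)) := by rw [← hspow]; ring

/-- Poisson kernel decay: `sup_{t>0} P_t^γ(j) ≤ C_γ / j` for `j ≥ 1`. -/
theorem poisson_kernel_decay (γ : ℝ) (hγ : 0 < γ) (hγ1 : γ < 1) :
    ∃ C : ℝ, 0 < C ∧ ∀ j : ℕ, 1 ≤ j → ∀ t : ℝ, 0 < t →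
      PoissonKer γ t j ≤ C / (j : ℝ) := by
  have hΓ : 0 < Real.Gamma γ := Real.Gamma_pos_of_pos hγ
  refine ⟨1 / Real.Gamma γ, by positivity, fun j hj t ht => ?_⟩
  have hjR : (0:ℝ) < (j : ℝ) := by exact_mod_cast hj
  have h4γ : (0:ℝ) < 4 ^ γ := Real.rpow_pos_of_pos (by norm_num) γ
  have hD : (0:ℝ) < 4 ^ γ * Real.Gamma γ * (j.factorial : ℝ) := by positivity
  -- integrability of the dominating function
  have hint : IntegrableOn (fun s : ℝ => 4 ^ γ * (Real.exp (-s) * s ^ ((j : ℝ) - 1)))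
      (Set.Ioi 0) := (Real.GammaIntegral_convergent hjR).const_mul _
  have hmono : t ^ (2 * γ) *
      (∫ s in Set.Ioi (0:ℝ), Real.exp (-s - t ^ 2 / (4 * s)) * s ^ ((j : ℝ) - γ - 1)) ≤
      4 ^ γ * Real.Gamma j := by
    rw [← MeasureTheory.integral_const_mul]
    have hG : Real.Gamma j = ∫ s in Set.Ioi (0:ℝ), Real.exp (-s) * s ^ ((j:ℝ) - 1) :=
      Real.Gamma_eq_integral hjR
    rw [hG, ← MeasureTheory.integral_const_mul]
    apply MeasureTheory.integral_mono_of_nonneg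
    · exact (ae_restrict_iff' measurableSet_Ioi).2 (Filter.Eventually.of_forall
        fun s hs => by
          have hs' : (0:ℝ) < s := hs
          positivity)
    · exact hint
    · exact (ae_restrict_iff' measurableSet_Ioi).2 (Filter.Eventually.of_forall
        fun s hs => key_bound hγ hγ1 ht hs j)
  have hfinal : 4 ^ γ * Real.Gamma j / (4 ^ γ * Real.Gamma γ * (j.factorial : ℝ)) =
      (1 / Real.Gamma γ) / (j : ℝ) := by
    obtain ⟨k, rfl⟩ := Nat.exists_eq_add_of_le hj
    have hGj : Real.Gamma ((1 + k : ℕ) : ℝ) = (k.factorial : ℝ) := by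
      rw [show ((1 + k : ℕ) : ℝ) = (k : ℝ) + 1 by push_cast; ring,
        Real.Gamma_nat_eq_factorial]
    rw [hGj]
    have hfac : ((1 + k).factorial : ℝ) = ((1 + k : ℕ) : ℝ) * (k.factorial : ℝ) := by
      rw [show 1 + k = k + 1 by ring, Nat.factorial_succ]; push_cast; ring
    rw [hfac]
    have hk : (0:ℝ) < (k.factorial : ℝ) := by positivity
    have hjk : (0:ℝ) < ((1 + k : ℕ) : ℝ) := by positivity
    field_simp
  unfold PoissonKer
  rw [div_mul_eq_mul_div, ← hfinal]
  exact (div_le_div_iff_of_pos_right hD).2 hmono
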